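/- Let H be a complex Hilbert space, P a bounded idempotent operator on H with range 𝒱, and S a bounded operator on H with S ∘ P = S, range of S contained in 𝒱, and ‖P − S‖ ≤ ε for some 0 ≤ ε < 1. Let A = (id_H − (P − S))⁻¹ = Σ_{n=0}^{∞} (P − S)^n (which exists by the Neumann series). Then A ∘ S = P, P − A ∘ S ∘ A = id_H − A, and ‖P − A S A‖ = ‖id_H − A‖ ≤ ε/(1 − ε). -/

import Mathlib

set_option maxHeartbeats 1000000
noncomputable section

/-- Exact duals from approximate ones: if `P` is a bounded idempotent with range `𝒱`,
`S ∘ P = S`, `range S ⊆ 𝒱` and `‖P − S‖ ≤ ε < 1`, then for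
`A = (id − (P − S))⁻¹ = Σ_{n≥0} (P − S)^n` one has `A S = P`,
`P − A S A = id − A` and `‖P − A S A‖ = ‖id − A‖ ≤ ε / (1 − ε)`. -/
theorem neumann_inverse_gives_exact_dual
    {H : Type*} [NormedAddCommGroup H] [InnerProductSpace ℂ H] [CompleteSpace H]
    (𝒱 : Submodule ℂ H) [CompleteSpace 𝒱]
    (P S : H →L[ℂ] H) (hPidem : P * P = P) (hPran : LinearMap.range (P : H →ₗ[ℂ] H) = 𝒱)
    (hSP : S * P = S) (hSran : LinearMap.range (S : H →ₗ[ℂ] H) ≤ 𝒱)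
    (ε : ℝ) (hε0 : 0 ≤ ε) (hε1 : ε < 1) (hPS : ‖P - S‖ ≤ ε)
    -- `A = (id − (P − S))⁻¹`, which exists by the Neumann series
    (A : H →L[ℂ] H) (hA₁ : A * (1 - (P - S)) = 1) (hA₂ : (1 - (P - S)) * A = 1) :
    A * S = P ∧
    P - A * S * A = 1 - A ∧
    ‖P - A * S * A‖ = ‖1 - A‖ ∧
    ‖1 - A‖ ≤ ε / (1 - ε) := by
  -- P * S = S since range S ≤ 𝒱 = range P and P is idempotent
  have hPSe : P * S = S := by
    ext x
    obtain ⟨y, (hy : P y = S x)⟩ := (hPran ▸ hSran) (LinearMap.mem_range_self (S : H →ₗ[ℂ] H) x)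
    have h : P (S x) = P (P y) := by rw [hy]
    calc (P * S) x = P (S x) := rfl
    _ = P (P y) := h
    _ = (P * P) y := rfl
    _ = P y := by rw [hPidem]
    _ = S x := hy
  -- (1 - (P - S)) * P = S
  have key : (1 - (P - S)) * P = S := by
    rw [sub_mul, one_mul, sub_mul, hPidem, hSP]; abel
  have h1 : A * S = P := by
    calc A * S = A * ((1 - (P - S)) * P) := by rw [key]
    _ = (A * (1 - (P - S))) * P := (mul_assoc _ _ _).symm
    _ = P := by rw [hA₁, one_mul]
  have h := hA₂
  rw [sub_mul, one_mul] at h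
  -- 1 - A = (S - P) * A
  have h1A : (1 : H →L[ℂ] H) - A = (S - P) * A := by
    have e : (S - P) * A = -((P - S) * A) := by rw [← neg_sub, neg_mul]
    rw [e, ← h]; abel
  have h2 : P - A * S * A = 1 - A := by
    have hP1A : P * ((1 : H →L[ℂ] H) - A) = 1 - A := by
      rw [h1A, ← mul_assoc, mul_sub, hPSe, hPidem]
    calc P - A * S * A = P - P * A := by rw [mul_assoc, ← h1, ← mul_assoc]
    _ = P * (1 - A) := by rw [mul_sub, mul_one]
    _ = 1 - A := hP1A
  refine ⟨h1, h2, by rw [h2], ?_⟩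
  -- bound on ‖A‖
  have hAle : ‖A‖ ≤ 1 / (1 - ε) := by
    have hA' : A = 1 + (P - S) * A := by rw [← h]; abel
    have hb : ‖A‖ ≤ 1 + ε * ‖A‖ := by
      calc ‖A‖ = ‖(1 : H →L[ℂ] H) + (P - S) * A‖ := by rw [← hA']
      _ ≤ ‖(1 : H →L[ℂ] H)‖ + ‖(P - S) * A‖ := norm_add_le _ _
      _ ≤ 1 + ‖P - S‖ * ‖A‖ := by
          gcongr
          · exact ContinuousLinearMap.norm_id_le
          · exact ContinuousLinearMap.opNorm_comp_le _ _
      _ ≤ 1 + ε * ‖A‖ := by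
          have := norm_nonneg A
          nlinarith
    rw [le_div_iff₀ (by linarith)]
    nlinarith
  have hSPn : ‖S - P‖ ≤ ε := by rw [norm_sub_rev]; exact hPS
  calc ‖(1 : H →L[ℂ] H) - A‖ = ‖(S - P) * A‖ := by rw [h1A]
  _ ≤ ‖S - P‖ * ‖A‖ := ContinuousLinearMap.opNorm_comp_le _ _
  _ ≤ ε * (1 / (1 - ε)) := by
      have := norm_nonneg A
      have := norm_nonneg (S - P)
      have h1ε : (0:ℝ) < 1 - ε := by linarith
      nlinarith
  _ = ε / (1 - ε) := by ring
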